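/- arXiv:1008.2156 — 2 statements merged into one kernel-verified Lean document; each statement's English description precedes it below -/
import Mathlib

section
/- Let α₁,…,α₅ be rationals with 0 < αᵢ ≤ 1/2 and ∑ᵢαᵢ = 1. In the k = 3 twisted sector set νᵢ = 3αᵢ/2 mod 1 in [0,1) and ν̃ᵢ = 3(αᵢ−1)/2 mod 1 in (−1,0]. Let A index the fields with αᵢ > 1/3 and m = |A|. Then the ground-state quantum numbers satisfy 2E₃ = m − 1 − 3∑_{A}α_A, q₃ = m − 1 − ∑_{A}α_A, and q̄₃ = −1/2 − ∑_{A}α_A, where E₃ = −5/8 + (1/2)∑ᵢ[νᵢ(1−νᵢ)+ν̃ᵢ(1+ν̃ᵢ)], q₃ = ∑ᵢ[(αᵢ−1)(ν̃ᵢ+1/2) − αᵢ(νᵢ−1/2)], and q̄₃ = ∑ᵢ[αᵢ(ν̃ᵢ+1/2)+(αᵢ−1)(−νᵢ+1/2)]. -/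
/-- Ground-state quantum numbers in the k = 3 twisted sector of a c = 9
Landau–Ginzburg orbifold with five fields. -/
theorem k3_vacuum_quantum_numbers (α : Fin 5 → ℚ)
    (hpos : ∀ i, 0 < α i) (hle : ∀ i, α i ≤ 1/2)
    (hsum : ∑ i, α i = 1)
    (ν νt : Fin 5 → ℚ)
    (hν : ∀ i, (∃ n : ℤ, ν i = 3 * α i / 2 - n) ∧ 0 ≤ ν i ∧ ν i < 1)
    (hνt : ∀ i, (∃ n : ℤ, νt i = 3 * (α i - 1) / 2 - n) ∧ -1 < νt i ∧ νt i ≤ 0) :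
    let A : Finset (Fin 5) := Finset.univ.filter fun i => 1/3 < α i
    let m : ℚ := A.card
    let E₃ : ℚ := -5/8 + (1/2) * ∑ i, (ν i * (1 - ν i) + νt i * (1 + νt i))
    let q₃ : ℚ := ∑ i, ((α i - 1) * (νt i + 1/2) - α i * (ν i - 1/2))
    let qb₃ : ℚ := ∑ i, (α i * (νt i + 1/2) + (α i - 1) * (-ν i + 1/2))
    2 * E₃ = m - 1 - 3 * ∑ i ∈ A, α i ∧
    q₃ = m - 1 - ∑ i ∈ A, α i ∧
    qb₃ = -(1/2) - ∑ i ∈ A, α i := by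
  intro A m E₃ q₃ qb₃
  set χ : Fin 5 → ℚ := fun i => if 1/3 < α i then 1 else 0 with hχ
  -- ν i = 3 α i / 2
  have h1 : ∀ i, ν i = 3 * α i / 2 := by
    intro i
    obtain ⟨⟨n, hn⟩, h0, h1⟩ := hν i
    have hp := hpos i
    have hl := hle i
    have hb1 : n < 1 := by exact_mod_cast (by rw [hn] at h0; linarith : (n:ℚ) < 1)
    have hb2 : -1 < n := by exact_mod_cast (by rw [hn] at h1; linarith : (-1:ℚ) < n)
    have : n = 0 := by omega
    rw [hn, this]; push_cast; ring
  -- νt i = 3 α i / 2 - 1/2 - χ i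
  have h2 : ∀ i, νt i = 3 * α i / 2 - 1/2 - χ i := by
    intro i
    obtain ⟨⟨n, hn⟩, hm1, h0⟩ := hνt i
    have hp := hpos i
    have hl := hle i
    by_cases hc : 1/3 < α i
    · have hb1 : n < 1 := by exact_mod_cast (by rw [hn] at hm1; linarith : (n:ℚ) < 1)
      have hb2 : -1 < n := by exact_mod_cast (by rw [hn] at h0; linarith : (-1:ℚ) < n)
      have hn0 : n = 0 := by omega
      rw [hn, hn0, hχ]; simp only []; rw [if_pos hc]; push_cast; ring
    · push_neg at hc
      have hb1 : n < 0 := by exact_mod_cast (by rw [hn] at hm1; linarith : (n:ℚ) < 0)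
      have hb2 : -2 < n := by exact_mod_cast (by rw [hn] at h0; linarith : (-2:ℚ) < n)
      have hn0 : n = -1 := by omega
      rw [hn, hn0, hχ]; simp only []; rw [if_neg (not_lt.mpr hc)]; push_cast; ring
  have hm : m = ∑ i, χ i := by
    simp only [hχ, m, A, Finset.sum_boole]
  have hAs : ∑ i ∈ A, α i = ∑ i, χ i * α i := by
    rw [Finset.sum_filter]
    refine Finset.sum_congr rfl fun i _ => ?_
    by_cases hc : 1/3 < α i <;> simp [hχ, hc]
  have keyE : ∀ i, ν i * (1 - ν i) + νt i * (1 + νt i)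
      = 3/2 * α i - 1/4 + χ i - 3 * (χ i * α i) := by
    intro i
    rw [h1 i, h2 i]
    by_cases hc : 1/3 < α i
    · simp only [hχ]; rw [if_pos hc]; ring
    · simp only [hχ]; rw [if_neg hc]; ring
  have keyq : ∀ i, (α i - 1) * (νt i + 1/2) - α i * (ν i - 1/2)
      = χ i - χ i * α i - α i := by
    intro i; rw [h1 i, h2 i]; ring
  have keyqb : ∀ i, α i * (νt i + 1/2) + (α i - 1) * (-ν i + 1/2)
      = 2 * α i - 1/2 - χ i * α i := by
    intro i; rw [h1 i, h2 i]; ring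
  have hE : ∑ i, (ν i * (1 - ν i) + νt i * (1 + νt i))
      = 3/2 * ∑ i, α i - 5/4 + ∑ i, χ i - 3 * ∑ i, χ i * α i := by
    rw [Finset.sum_congr rfl fun i _ => keyE i]
    simp [Finset.sum_add_distrib, Finset.sum_sub_distrib, Finset.mul_sum]
    norm_num
  have hq : q₃ = ∑ i, χ i - ∑ i, χ i * α i - ∑ i, α i := by
    show (∑ i, ((α i - 1) * (νt i + 1/2) - α i * (ν i - 1/2))) = _
    rw [Finset.sum_congr rfl fun i _ => keyq i]
    simp [Finset.sum_sub_distrib]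
  have hqb : qb₃ = 2 * ∑ i, α i - 5/2 - ∑ i, χ i * α i := by
    show (∑ i, (α i * (νt i + 1/2) + (α i - 1) * (-ν i + 1/2))) = _
    rw [Finset.sum_congr rfl fun i _ => keyqb i]
    simp [Finset.sum_add_distrib, Finset.sum_sub_distrib, Finset.mul_sum]
    norm_num
  refine ⟨?_, ?_, ?_⟩
  · show 2 * (-5/8 + (1/2) * ∑ i, (ν i * (1 - ν i) + νt i * (1 + νt i))) = _
    rw [hE, hsum, hm, hAs]; ring
  · rw [hq, hsum, hm, hAs]; ring
  · rw [hqb, hsum, hAs]; ring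
end

section
/- Let W = x₀⁵ + x₁⁵ + x₂⁵ + x₃⁵ + x₄⁵ ∈ ℂ[x₀,…,x₄]. The space of pairs of 5×5 complex matrices (c, d) satisfying, for each i = 0,…,4, the polynomial identity −4∑ⱼ c^{ij} ∂ⱼW + ∑_{k,j} d^{kj} x_k ∂²W/∂xᵢ∂xⱼ = 0, is exactly 5-dimensional, consisting of the pairs with c and d diagonal and c^{ii} = d^{ii} for all i. -/
open MvPolynomial

/-- The Fermat quintic superpotential. -/
noncomputable def fermatQuintic : MvPolynomial (Fin 5) ℂ := ∑ i, X i ^ 5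

lemma fermatQuintic_d1 (j : Fin 5) : pderiv j fermatQuintic = C 5 * X j ^ 4 := by
  simp [fermatQuintic, pderiv_pow, Pi.single_apply, mul_ite, Finset.sum_ite_eq', map_ofNat]

lemma fermatQuintic_d2 (i j : Fin 5) :
    pderiv i (pderiv j fermatQuintic) = if i = j then C 20 * X i ^ 3 else 0 := by
  rw [fermatQuintic_d1, pderiv_mul, pderiv_C]
  split_ifs with h
  · subst h; simp [pderiv_pow, Pi.single_apply, map_ofNat]; ring
  · simp [pderiv_pow, Pi.single_apply, Ne.symm h]

lemma fermatQuintic_aux1 (j : Fin 5) : ((C 5 : MvPolynomial (Fin 5) ℂ) * X j ^ 4)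
    = monomial (Finsupp.single j 4) 5 := by
  rw [X_pow_eq_monomial, C_mul_monomial, mul_one]

lemma fermatQuintic_aux2 (k i : Fin 5) : (X k * (C 20 * X i ^ 3) : MvPolynomial (Fin 5) ℂ)
    = monomial (Finsupp.single k 1 + Finsupp.single i 3) 20 := by
  rw [X_pow_eq_monomial, C_mul_monomial, mul_one,
    show (X k : MvPolynomial (Fin 5) ℂ) = monomial (Finsupp.single k 1) 1 by
      rw [← X_pow_eq_monomial, pow_one],
    monomial_mul, one_mul]

lemma fermatQuintic_key (c d : Matrix (Fin 5) (Fin 5) ℂ) (i : Fin 5)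
    (h : (-4 : ℂ) • (∑ j, c i j • pderiv j fermatQuintic) +
        ∑ k, ∑ j, d k j • (X k * pderiv i (pderiv j fermatQuintic)) = 0) :
    ∀ (m : Fin 5 →₀ ℕ), (-20:ℂ) * ∑ j, (if Finsupp.single j 4 = m then c i j else 0)
      + 20 * ∑ k, (if Finsupp.single k 1 + Finsupp.single i 3 = m then d k i else 0) = 0 := by
  intro m
  simp only [fermatQuintic_d2] at h
  simp only [mul_ite, mul_zero, smul_ite, smul_zero, Finset.sum_ite_eq', Finset.sum_ite_eq,
    Finset.mem_univ, if_true, fermatQuintic_d1, fermatQuintic_aux1, fermatQuintic_aux2] at h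
  have := congrArg (coeff m) h
  simp only [coeff_add, coeff_zero, coeff_smul, coeff_sum, coeff_monomial,
    mul_ite, mul_zero, smul_ite, smul_zero, Finset.mul_sum, Finset.smul_sum,
    smul_eq_mul] at this
  rw [show ((-20:ℂ) * ∑ j, (if Finsupp.single j 4 = m then c i j else 0))
      = ∑ x : Fin 5, if Finsupp.single x 4 = m then -4 * (c i x * 5) else 0 by
    rw [Finset.mul_sum]; exact Finset.sum_congr rfl fun _ _ => by split_ifs <;> ring]
  rw [show ((20:ℂ) * ∑ k, (if Finsupp.single k 1 + Finsupp.single i 3 = m then d k i else 0))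
      = ∑ x : Fin 5, if Finsupp.single x 1 + Finsupp.single i 3 = m then d x i * 20 else 0 by
    rw [Finset.mul_sum]; exact Finset.sum_congr rfl fun _ _ => by split_ifs <;> ring]
  exact this

lemma fermatQuintic_f1 (j j' : Fin 5) :
    (Finsupp.single j 4 = Finsupp.single j' (4:ℕ)) ↔ j = j' :=
  Finsupp.single_left_inj (by norm_num)

lemma fermatQuintic_f2 {i j' : Fin 5} (hj : j' ≠ i) (k : Fin 5) :
    ¬(Finsupp.single k 1 + Finsupp.single i 3 = Finsupp.single j' (4:ℕ)) := by
  intro h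
  have := DFunLike.congr_fun h i
  simp [Finsupp.single_apply, Ne.symm hj] at this

lemma fermatQuintic_f3 (k i : Fin 5) :
    (Finsupp.single k 1 + Finsupp.single i 3 = Finsupp.single i (4:ℕ)) ↔ k = i := by
  constructor
  · intro h
    by_contra hk
    have := DFunLike.congr_fun h k
    simp [Finsupp.single_apply, hk, Ne.symm hk] at this
  · rintro rfl
    ext a
    simp [Finsupp.single_apply]
    split_ifs <;> omega

lemma fermatQuintic_f4 {k' i : Fin 5} (hk' : k' ≠ i) (k : Fin 5) :
    (Finsupp.single k 1 + Finsupp.single i 3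
      = Finsupp.single k' 1 + Finsupp.single i (3:ℕ)) ↔ k = k' := by
  constructor
  · intro h
    exact (Finsupp.single_left_inj one_ne_zero).mp (add_right_cancel h)
  · rintro rfl; rfl

lemma fermatQuintic_f5 {k' i : Fin 5} (hk' : k' ≠ i) (j : Fin 5) :
    ¬(Finsupp.single j 4 = Finsupp.single k' 1 + Finsupp.single i (3:ℕ)) := by
  intro h
  have := DFunLike.congr_fun h i
  simp [Finsupp.single_apply, Ne.symm hk'] at this
  split_ifs at this <;> omega

/-- The kernel of Q̄ on the q̄ = −3/2 states of the k = 1 sector of the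
Fermat quintic LG orbifold: pairs (c,d) solving the identity are exactly the
pairs of equal diagonal matrices (a 5-dimensional space). -/
theorem fermat_quintic_Qbar_kernel (c d : Matrix (Fin 5) (Fin 5) ℂ) :
    (∀ i : Fin 5,
      (-4 : ℂ) • (∑ j, c i j • pderiv j fermatQuintic) +
        ∑ k, ∑ j, d k j • (X k * pderiv i (pderiv j fermatQuintic)) = 0)
    ↔ ∃ e : Fin 5 → ℂ, c = Matrix.diagonal e ∧ d = Matrix.diagonal e := by
  constructor
  · intro h
    have hc : ∀ i j : Fin 5, j ≠ i → c i j = 0 := by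
      intro i j hj
      have := fermatQuintic_key c d i (h i) (Finsupp.single j 4)
      simp only [fermatQuintic_f1, fermatQuintic_f2 hj, Finset.sum_ite_eq',
        Finset.mem_univ, if_true, if_false, Finset.sum_const_zero, mul_zero, add_zero] at this
      linear_combination (-1/20 : ℂ) * this
    have hd : ∀ k i : Fin 5, k ≠ i → d k i = 0 := by
      intro k i hk
      have := fermatQuintic_key c d i (h i) (Finsupp.single k 1 + Finsupp.single i 3)
      simp only [fermatQuintic_f4 hk, fermatQuintic_f5 hk, Finset.sum_ite_eq',
        Finset.mem_univ, if_true, if_false, Finset.sum_const_zero, mul_zero, zero_add] at this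
      linear_combination (1/20 : ℂ) * this
    have hcd : ∀ i : Fin 5, c i i = d i i := by
      intro i
      have := fermatQuintic_key c d i (h i) (Finsupp.single i 4)
      simp only [fermatQuintic_f1, fermatQuintic_f3, Finset.sum_ite_eq',
        Finset.mem_univ, if_true] at this
      linear_combination (-1/20 : ℂ) * this
    refine ⟨fun i => c i i, ?_, ?_⟩
    · ext i j
      rcases eq_or_ne i j with rfl | hij
      · simp [Matrix.diagonal_apply]
      · simp [Matrix.diagonal_apply, hij, hc i j (Ne.symm hij)]
    · ext i j
      rcases eq_or_ne i j with rfl | hij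
      · simp [Matrix.diagonal_apply, hcd i]
      · simp [Matrix.diagonal_apply, hij, hd i j hij]
  · rintro ⟨e, rfl, rfl⟩
    intro i
    simp only [fermatQuintic_d2]
    simp only [mul_ite, mul_zero, smul_ite, smul_zero, Matrix.diagonal_apply, ite_smul,
      zero_smul, Finset.sum_ite_eq, Finset.sum_ite_eq', Finset.mem_univ, if_true,
      fermatQuintic_d1, fermatQuintic_aux1, fermatQuintic_aux2,
      show Finsupp.single i 1 + Finsupp.single i 3 = Finsupp.single i (4:ℕ) by
        rw [← Finsupp.single_add]]
    rw [smul_monomial, smul_monomial, smul_monomial, ← map_add, show (-4:ℂ) • e i • (5:ℂ) + e i • 20 = 0 by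
      simp only [smul_eq_mul]; ring, map_zero]
end
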